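/- Let R be a ring and n ≥ 1 an integer. Suppose that for every countably generated right R-submodule T of the right R-module Rⁿ (column vectors), every R-linear map T → Rⁿ extends to an R-linear map Rⁿ → Rⁿ. Then the matrix ring Mₙ(R) is right ℵ₀-injective. -/

import Mathlib

open MulOpposite Matrix
set_option linter.unusedSectionVars false

section Helpers
variable {R : Type*} [Ring R] {n : ℕ} [NeZero n]

private def colv (A : Matrix (Fin n) (Fin n) R) (j : Fin n) : Fin n → R := fun i => A i j

private def emb (v : Fin n → R) : Matrix (Fin n) (Fin n) R :=
  Matrix.of fun i j => if j = 0 then v i else 0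

private lemma emb_col (x : Matrix (Fin n) (Fin n) R) (j : Fin n) :
    emb (colv x j) = x * Matrix.single j 0 (1 : R) := by
  ext i k
  simp [emb, colv, Matrix.mul_apply, Matrix.single, ite_and, mul_ite,
    eq_comm (a := j), Finset.sum_ite_eq, eq_comm (b := k)]

private lemma emb_add (v w : Fin n → R) : emb (v + w) = emb v + emb w := by
  ext i k; simp [emb]; split <;> simp

private lemma emb_smul (r : R) (v : Fin n → R) :
    emb (op r • v) = emb v * (r • (1 : Matrix (Fin n) (Fin n) R)) := by
  ext i k
  by_cases hk : k = 0 <;>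
    simp [emb, Matrix.mul_apply, Pi.smul_apply, op_smul_eq_mul, Matrix.one_apply,
      mul_ite, ite_and, hk, Finset.sum_ite_eq, Finset.sum_ite_eq']

private lemma emb_zero : emb (0 : Fin n → R) = 0 := by
  ext i k; simp [emb]

private lemma colv_mul (x B : Matrix (Fin n) (Fin n) R) (j : Fin n) :
    colv (x * B) j = ∑ c, op (B c j) • colv x c := by
  ext i
  simp [colv, Matrix.mul_apply, op_smul_eq_mul]

private lemma colv_add (x y : Matrix (Fin n) (Fin n) R) (j : Fin n) :
    colv (x + y) j = colv x j + colv y j := rfl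

private lemma colv_zero (j : Fin n) : colv (0 : Matrix (Fin n) (Fin n) R) j = 0 := rfl

private lemma colv_emb (v : Fin n → R) : colv (emb v) 0 = v := by
  ext i; simp [colv, emb]

private lemma colv_mul_scalar (y : Matrix (Fin n) (Fin n) R) (r : R) (k : Fin n) :
    colv (y * (r • (1 : Matrix (Fin n) (Fin n) R))) k = op r • colv y k := by
  ext i
  simp [colv, Matrix.mul_apply, Matrix.one_apply, mul_ite, op_smul_eq_mul,
    Finset.sum_ite_eq', Pi.smul_apply]

private lemma colv_mul_std (y : Matrix (Fin n) (Fin n) R) (j : Fin n) :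
    colv (y * Matrix.single j 0 (1 : R)) 0 = colv y j := by
  ext i
  simp [colv, Matrix.mul_apply, Matrix.single, ite_and, mul_ite,
    eq_comm (a := j), Finset.sum_ite_eq]

end Helpers

def IsRightAleph0Injective (R : Type*) [Ring R] : Prop :=
  ∀ I : Submodule Rᵐᵒᵖ R,
    (∃ S : Set R, S.Countable ∧ Submodule.span Rᵐᵒᵖ S = I) →
    ∀ f : I →ₗ[Rᵐᵒᵖ] R, ∃ g : R →ₗ[Rᵐᵒᵖ] R, ∀ x : I, g (x : R) = f x

theorem matrix_isRightAleph0Injective_of_extend (R : Type*) [Ring R]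
    (n : ℕ) (hn : 1 ≤ n)
    (h : ∀ T : Submodule Rᵐᵒᵖ (Fin n → R),
      (∃ S : Set (Fin n → R), S.Countable ∧ Submodule.span Rᵐᵒᵖ S = T) →
      ∀ f : T →ₗ[Rᵐᵒᵖ] (Fin n → R),
        ∃ g : (Fin n → R) →ₗ[Rᵐᵒᵖ] (Fin n → R), ∀ x : T, g (x : Fin n → R) = f x) :
    IsRightAleph0Injective (Matrix (Fin n) (Fin n) R) := by
  haveI : NeZero n := ⟨by omega⟩
  rintro I ⟨S, hSc, hSI⟩ f
  set T : Submodule Rᵐᵒᵖ (Fin n → R) :=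
    { carrier := {v | emb v ∈ I}
      add_mem' := fun hv hw => by
        simpa only [Set.mem_setOf_eq, emb_add] using add_mem hv hw
      zero_mem' := by
        show emb (0 : Fin n → R) ∈ I
        rw [emb_zero]; exact zero_mem I
      smul_mem' := by
        rintro ⟨r⟩ v hv
        show emb (op r • v) ∈ I
        rw [emb_smul, ← op_smul_eq_mul]
        exact I.smul_mem _ hv } with hTdef
  set S' : Set (Fin n → R) := ⋃ k : Fin n, (fun s => colv s k) '' S with hS'def
  have hS'c : S'.Countable := Set.countable_iUnion fun k => hSc.image _
  have hSsubI : S ⊆ (I : Set (Matrix (Fin n) (Fin n) R)) := hSI ▸ Submodule.subset_span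
  have key : ∀ x ∈ I, ∀ k, colv x k ∈ Submodule.span Rᵐᵒᵖ S' := by
    intro x hx
    rw [← hSI] at hx
    induction hx using Submodule.span_induction with
    | mem x hxS =>
      intro k
      exact Submodule.subset_span (Set.mem_iUnion.2 ⟨k, Set.mem_image_of_mem _ hxS⟩)
    | zero => intro k; rw [colv_zero]; exact zero_mem _
    | add x y _ _ ihx ihy => intro k; rw [colv_add]; exact add_mem (ihx k) (ihy k)
    | smul c x _ ih =>
      intro k
      have hcx : c • x = x * c.unop := by
        rw [← op_unop c, op_smul_eq_mul, unop_op]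
      rw [hcx, colv_mul]
      exact Submodule.sum_mem _ fun c' _ => Submodule.smul_mem _ _ (ih c')
  have hTspan : Submodule.span Rᵐᵒᵖ S' = T := by
    apply le_antisymm
    · rw [Submodule.span_le]
      intro v hv
      rcases Set.mem_iUnion.1 hv with ⟨k, s, hsS, rfl⟩
      show emb (colv s k) ∈ I
      rw [emb_col, ← op_smul_eq_mul]
      exact I.smul_mem _ (hSsubI hsS)
    · intro v hv
      have hv2 := key (emb v) hv 0
      rwa [colv_emb] at hv2
  have hmemT' : ∀ t : T, emb (t : Fin n → R) ∈ I := fun t => t.2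
  set fbar : T →ₗ[Rᵐᵒᵖ] (Fin n → R) :=
    { toFun := fun t => colv (f ⟨emb (t : Fin n → R), hmemT' t⟩) 0
      map_add' := by
        rintro ⟨v, hv⟩ ⟨w, hw⟩
        have hvw : emb (v + w) ∈ I := by
          rw [emb_add]; exact add_mem hv hw
        have he : (⟨emb (v + w), hvw⟩ : I) = ⟨emb v, hv⟩ + ⟨emb w, hw⟩ :=
          Subtype.ext (emb_add v w)
        show colv (f ⟨emb (v + w), hvw⟩) 0
            = colv (f ⟨emb v, hv⟩) 0 + colv (f ⟨emb w, hw⟩) 0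
        rw [he, map_add, colv_add]
      map_smul' := by
        rintro ⟨r⟩ ⟨v, hv⟩
        have hv' : emb (op r • v) ∈ I := by
          rw [emb_smul, ← op_smul_eq_mul]; exact I.smul_mem _ hv
        have he : (⟨emb (op r • v), hv'⟩ : I)
            = op (r • (1 : Matrix (Fin n) (Fin n) R)) • ⟨emb v, hv⟩ := by
          apply Subtype.ext
          show emb (op r • v) = op (r • (1 : Matrix (Fin n) (Fin n) R)) • emb v
          rw [op_smul_eq_mul, emb_smul]
        show colv (f ⟨emb (op r • v), hv'⟩) 0 = op r • colv (f ⟨emb v, hv⟩) 0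
        rw [he, f.map_smul, op_smul_eq_mul, colv_mul_scalar] } with hfbardef
  obtain ⟨g, hg⟩ := h T ⟨S', hS'c, hTspan⟩ fbar
  refine ⟨{ toFun := fun A => Matrix.of fun i j => g (colv A j) i
            map_add' := ?_
            map_smul' := ?_ }, ?_⟩
  · intro A B
    ext i j
    show g (colv (A + B) j) i = _
    rw [colv_add, map_add]
    rfl
  · intro c A
    ext i j
    have hc : c • A = A * c.unop := by rw [← op_unop c, op_smul_eq_mul, unop_op]
    show g (colv (c • A) j) i
        = (c • Matrix.of fun i j => g (colv A j) i) i j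
    have hc2 : (c • Matrix.of fun i j => g (colv A j) i) i j
        = ∑ k, g (colv A k) i * (c.unop k j) := by
      rw [← op_unop c, op_smul_eq_mul]
      simp [Matrix.mul_apply]
    rw [hc, colv_mul, map_sum, hc2]
    simp [op_smul_eq_mul]
  · intro x
    ext i j
    have hmem : emb (colv (x : Matrix (Fin n) (Fin n) R) j) ∈ I := by
      rw [emb_col, ← op_smul_eq_mul]; exact I.smul_mem _ x.2
    have he : (⟨emb (colv (x : Matrix (Fin n) (Fin n) R) j), hmem⟩ : I)
        = op (Matrix.single j (0 : Fin n) (1 : R)) • x := by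
      apply Subtype.ext
      show emb (colv (x : Matrix (Fin n) (Fin n) R) j)
          = op (Matrix.single j (0 : Fin n) (1 : R)) • (x : Matrix (Fin n) (Fin n) R)
      rw [op_smul_eq_mul, emb_col]
    have h1 : g (colv (x : Matrix (Fin n) (Fin n) R) j)
        = fbar ⟨colv (x : Matrix (Fin n) (Fin n) R) j, hmem⟩ :=
      hg ⟨colv (x : Matrix (Fin n) (Fin n) R) j, hmem⟩
    have h2 : fbar ⟨colv (x : Matrix (Fin n) (Fin n) R) j, hmem⟩
        = colv (f ⟨emb (colv (x : Matrix (Fin n) (Fin n) R) j), hmem⟩) 0 := rfl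
    show g (colv (x : Matrix (Fin n) (Fin n) R) j) i = f x i j
    rw [h1, h2, he, f.map_smul, op_smul_eq_mul, colv_mul_std]
    rfl
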